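/- For real α with 0 < α ≤ 1, the function s ↦ ζ(s, α) − 1/(s−1), where ζ(s, α) is the Hurwitz zeta function, extends holomorphically to s = 1, and its value at s = 1 equals −Γ'(α)/Γ(α) (minus the digamma function at α); that is, the zeroth generalized Stieltjes constant satisfies γ₀(α) = −Γ'(α)/Γ(α). -/

import Mathlib

open Complex Filter Topology HurwitzZeta

/-- The entire extension of `ζ(s,α) - 1/(s-1)`. -/
noncomputable def hurwitzZetaSubPole (α : ℝ) : ℂ → ℂ :=
  Function.update (fun s : ℂ => hurwitzZeta (α : UnitAddCircle) s - 1 / (s - 1)) 1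
    (limUnder (𝓝[≠] (1 : ℂ)) (fun s : ℂ => hurwitzZeta (α : UnitAddCircle) s - 1 / (s - 1)))

/-- The generalized Stieltjes constants `γ_n(α) = (-1)^n g^{(n)}(1)`,
where `g(s) = ζ(s,α) - 1/(s-1)`. -/
noncomputable def stieltjesGammaGen (n : ℕ) (α : ℝ) : ℝ :=
  ((-1 : ℝ) ^ n) * (iteratedDeriv n (hurwitzZetaSubPole α) 1).re


namespace StieltjesAux

/-- The summand in the digamma series. -/
noncomputable def dterm (x : ℝ) (i : ℕ) : ℝ := 1 / (i + 1) - 1 / (x + i)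

lemma dterm_eq {x : ℝ} (hx : 0 < x) (i : ℕ) :
    dterm x i = (x - 1) / ((i + 1) * (x + i)) := by
  have h1 : (0:ℝ) < (i:ℝ) + 1 := by positivity
  have h2 : (0:ℝ) < x + i := by positivity
  rw [dterm, div_sub_div _ _ h1.ne' h2.ne']
  ring

lemma dterm_bound {a b x : ℝ} (ha : 0 < a) (ha1 : a ≤ 1) (hax : a ≤ x) (hxb : x ≤ b) (i : ℕ) :
    |dterm x i| ≤ (b + 1) / a * (1 / ((i:ℝ) + 1) ^ 2) := by
  have hx : 0 < x := lt_of_lt_of_le ha hax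
  have h1 : (0:ℝ) < (i:ℝ) + 1 := by positivity
  have h2 : (0:ℝ) < x + i := by positivity
  rw [dterm_eq hx, abs_div, abs_of_pos (show (0:ℝ) < ((i:ℝ)+1)*(x+(i:ℝ)) by positivity)]
  have hnum : |x - 1| ≤ b + 1 := by
    rw [abs_le]; constructor <;> nlinarith
  have hden : a * ((i:ℝ) + 1) ^ 2 ≤ (i + 1) * (x + i) := by
    have : a * ((i:ℝ) + 1) ≤ x + i := by nlinarith
    nlinarith
  calc |x - 1| / ((i + 1) * (x + i)) ≤ (b + 1) / (a * ((i:ℝ) + 1) ^ 2) :=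
        div_le_div₀ (by linarith) hnum (by positivity) hden
      _ = (b + 1) / a * (1 / ((i:ℝ) + 1) ^ 2) := by
        field_simp

lemma summable_sq : Summable (fun i : ℕ => 1 / ((i:ℝ) + 1) ^ 2) := by
  have := Real.summable_one_div_nat_pow.mpr (le_refl 2)
  have h := (summable_nat_add_iff 1).mpr this
  refine h.congr fun i => ?_
  push_cast
  ring

lemma summable_dterm {x : ℝ} (hx : 0 < x) : Summable (fun i => dterm x i) := by
  set a := min x 1 with ha
  have ha0 : 0 < a := lt_min hx one_pos
  refine Summable.of_abs (Summable.of_nonneg_of_le (fun i => abs_nonneg _)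
    (fun i => dterm_bound ha0 (min_le_right _ _) (min_le_left _ _) (le_refl x) i) ?_)
  exact (summable_sq.mul_left _)


/-- Shifting the index in a uniform limit of partial sums. -/
lemma tendstoUniformlyOn_shift {f : ℕ → ℝ → ℝ} {g : ℝ → ℝ} {s : Set ℝ}
    (h : TendstoUniformlyOn f g atTop s) :
    TendstoUniformlyOn (fun n => f (n + 1)) g atTop s := by
  intro u hu
  exact (tendsto_add_atTop_nat 1).eventually (h u hu)

/-- The sequence of partial-sum derivatives. -/
noncomputable def fseq (n : ℕ) (y : ℝ) : ℝ :=
  y * Real.log n + Real.log (n.factorial) - ∑ i ∈ Finset.range (n + 1), Real.log (y + i)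

noncomputable def fseq' (n : ℕ) (y : ℝ) : ℝ :=
  Real.log n - ∑ i ∈ Finset.range (n + 1), (y + i)⁻¹

noncomputable def glim' (y : ℝ) : ℝ :=
  -Real.eulerMascheroniConstant + ∑' i : ℕ, dterm y i

lemma hasDerivAt_fseq (n : ℕ) {y : ℝ} (hy : 0 < y) :
    HasDerivAt (fseq n) (fseq' n y) y := by
  have h1 : HasDerivAt (fun y : ℝ => y * Real.log n + Real.log (n.factorial))
      (Real.log n) y := by
    simpa using (hasDerivAt_mul_const (Real.log n)).add_const (Real.log (n.factorial))
  have h2 : HasDerivAt (fun y : ℝ => ∑ i ∈ Finset.range (n + 1), Real.log (y + i))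
      (∑ i ∈ Finset.range (n + 1), (y + i)⁻¹) y := by
    apply HasDerivAt.fun_sum
    intro i _
    have : HasDerivAt (fun y : ℝ => y + i) 1 y := (hasDerivAt_id y).add_const _
    simpa using this.log (by positivity)
  exact h1.sub h2

lemma tendsto_const_part :
    Tendsto (fun n : ℕ => Real.log n - (harmonic (n + 1) : ℝ)) atTop
      (𝓝 (-Real.eulerMascheroniConstant)) := by
  have h1 := Real.tendsto_harmonic_sub_log
  have h2 : Tendsto (fun n : ℕ => ((n:ℝ) + 1)⁻¹) atTop (𝓝 0) := by
    simpa using tendsto_one_div_add_atTop_nhds_zero_nat (𝕜 := ℝ)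
  have := (h1.neg.sub h2)
  simp only [neg_sub, sub_zero] at this
  refine this.congr fun n => ?_
  rw [harmonic_succ]
  push_cast
  ring

lemma harmonic_cast_sum (n : ℕ) :
    (harmonic n : ℝ) = ∑ i ∈ Finset.range n, ((i:ℝ) + 1)⁻¹ := by
  unfold harmonic
  push_cast
  rfl

lemma fseq'_decomp (n : ℕ) (y : ℝ) :
    fseq' n y = (Real.log n - (harmonic (n + 1) : ℝ)) + ∑ i ∈ Finset.range (n + 1), dterm y i := by
  simp only [fseq', harmonic_cast_sum, dterm, Finset.sum_sub_distrib, one_div]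
  ring

lemma tendstoLocallyUniformlyOn_fseq' :
    TendstoLocallyUniformlyOn fseq' glim' atTop (Set.Ioi 0) := by
  rw [tendstoLocallyUniformlyOn_iff_forall_isCompact isOpen_Ioi]
  intro K hK hKc
  rcases K.eq_empty_or_nonempty with rfl | hne
  · simp [TendstoUniformlyOn]
  obtain ⟨a, haK, ha⟩ := hKc.exists_isLeast hne
  obtain ⟨b, hbK, hb⟩ := hKc.exists_isGreatest hne
  have ha0 : 0 < a := hK haK
  set a' := min a 1 with ha'
  have ha'0 : 0 < a' := lt_min ha0 one_pos
  -- uniform convergence of the sums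
  have hsum : TendstoUniformlyOn
      (fun n y => ∑ i ∈ Finset.range n, dterm y i) (fun y => ∑' i, dterm y i) atTop K := by
    apply tendstoUniformlyOn_tsum_nat (u := fun i => (b + 1) / a' * (1 / ((i:ℝ) + 1) ^ 2))
      (summable_sq.mul_left _)
    intro i y hy
    rw [Real.norm_eq_abs]
    exact dterm_bound ha'0 (min_le_right _ _) (le_trans (min_le_left _ _) (ha hy)) (hb hy) i
  have hconst : TendstoUniformlyOn
      (fun n : ℕ => fun _ : ℝ => Real.log n - (harmonic (n + 1) : ℝ))
      (fun _ => -Real.eulerMascheroniConstant) atTop K :=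
    tendsto_const_part.tendstoUniformlyOn_const K
  have := hconst.add (tendstoUniformlyOn_shift hsum)
  refine this.congr ?_
  filter_upwards with n
  intro y _
  exact (fseq'_decomp n y).symm


lemma fseq_eq_log_GammaSeq {x : ℝ} (hx : 0 < x) {n : ℕ} (hn : 1 ≤ n) :
    fseq n x = Real.log (Real.GammaSeq x n) := by
  have hn0 : (0:ℝ) < n := by exact_mod_cast hn
  have hprod : (0:ℝ) < ∏ j ∈ Finset.range (n + 1), (x + j) :=
    Finset.prod_pos fun j _ => by positivity
  rw [Real.GammaSeq, Real.log_div (by positivity) hprod.ne', Real.log_mul (by positivity)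
    (by exact_mod_cast n.factorial_pos.ne'), Real.log_rpow hn0,
    Real.log_prod (fun j _ => by positivity)]
  rfl

lemma tendsto_fseq {x : ℝ} (hx : 0 < x) :
    Tendsto (fun n => fseq n x) atTop (𝓝 (Real.log (Real.Gamma x))) := by
  have h1 : Tendsto (fun n => Real.log (Real.GammaSeq x n)) atTop
      (𝓝 (Real.log (Real.Gamma x))) :=
    ((Real.continuousAt_log (Real.Gamma_pos_of_pos hx).ne').tendsto).comp
      (Real.GammaSeq_tendsto_Gamma x)
  refine h1.congr' ?_
  filter_upwards [eventually_ge_atTop 1] with n hn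
  exact (fseq_eq_log_GammaSeq hx hn).symm

lemma hasDerivAt_log_Gamma {x : ℝ} (hx : 0 < x) :
    HasDerivAt (fun y => Real.log (Real.Gamma y)) (glim' x) x := by
  apply hasDerivAt_of_tendstoLocallyUniformlyOn isOpen_Ioi tendstoLocallyUniformlyOn_fseq'
    (f := fseq) ?_ (fun y hy => tendsto_fseq hy) (Set.mem_Ioi.mpr hx)
  filter_upwards with n
  exact fun y hy => hasDerivAt_fseq n hy

/-- The digamma series formula. -/
lemma digamma_eq {x : ℝ} (hx : 0 < x) :
    deriv Real.Gamma x / Real.Gamma x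
      = -Real.eulerMascheroniConstant + ∑' i : ℕ, dterm x i := by
  have hΓ : DifferentiableAt ℝ Real.Gamma x :=
    Real.differentiableAt_Gamma fun m => by
      have : (0:ℝ) ≤ m := m.cast_nonneg
      intro h; rw [h] at hx; linarith
  have h2 : HasDerivAt (fun y => Real.log (Real.Gamma y))
      (deriv Real.Gamma x / Real.Gamma x) x :=
    hΓ.hasDerivAt.log (Real.Gamma_pos_of_pos hx).ne'
  exact h2.unique (hasDerivAt_log_Gamma hx)


/-! ## Complex part -/

noncomputable def cterm (α : ℝ) (n : ℕ) (s : ℂ) : ℂ :=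
  1 / ((n : ℂ) + α) ^ s - 1 / ((n : ℂ) + 1) ^ s

noncomputable def Fc (α : ℝ) (s : ℂ) : ℂ := ∑' n : ℕ, cterm α n s

lemma hasDerivAt_cpow_real {s : ℂ} {t : ℝ} (ht : 0 < t) :
    HasDerivAt (fun t : ℝ => (t : ℂ) ^ (-s)) (-s * (t : ℂ) ^ (-s - 1)) t := by
  have h0 : HasDerivAt (fun z : ℂ => z ^ (-s)) (-s * (t : ℂ) ^ (-s - 1)) (t : ℂ) :=
    (Complex.hasStrictDerivAt_cpow_const (Complex.ofReal_mem_slitPlane.mpr ht)).hasDerivAt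
  exact h0.comp_ofReal

lemma norm_cterm_le {α : ℝ} (hα : 0 < α) (hα1 : α ≤ 1) {s : ℂ}
    (hre : 1 / 2 ≤ s.re) (habs : ‖s‖ ≤ 2) {n : ℕ} (hn : n ≠ 0) :
    ‖cterm α n s‖ ≤ 2 * (n : ℝ) ^ (-(3/2) : ℝ) := by
  have hn1 : (1:ℝ) ≤ n := by exact_mod_cast Nat.one_le_iff_ne_zero.mpr hn
  set C : ℝ := 2 * (n : ℝ) ^ (-(3/2) : ℝ) with hC
  have hC0 : 0 ≤ C := by positivity
  have key : ∀ x ∈ Set.Icc ((n:ℝ) + α) ((n:ℝ) + 1),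
      HasDerivWithinAt (fun t : ℝ => (t : ℂ) ^ (-s)) (-s * (x : ℂ) ^ (-s - 1))
        (Set.Icc ((n:ℝ) + α) ((n:ℝ) + 1)) x := fun x hx =>
    (hasDerivAt_cpow_real (by linarith [hx.1])).hasDerivWithinAt
  have bound : ∀ x ∈ Set.Icc ((n:ℝ) + α) ((n:ℝ) + 1), ‖-s * (x : ℂ) ^ (-s - 1)‖ ≤ C := by
    intro x hx
    have hx0 : (0:ℝ) < x := by linarith [hx.1]
    rw [norm_mul, norm_neg,
      Complex.norm_cpow_eq_rpow_re_of_pos hx0]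
    have h1 : x ^ (-s - 1).re ≤ (n : ℝ) ^ (-s - 1).re := by
      apply Real.rpow_le_rpow_of_nonpos (by linarith) (by linarith [hx.1])
      simp only [Complex.sub_re, Complex.neg_re, Complex.one_re]
      linarith
    have h2 : (n : ℝ) ^ (-s - 1).re ≤ (n : ℝ) ^ (-(3/2) : ℝ) := by
      apply Real.rpow_le_rpow_of_exponent_le hn1
      simp only [Complex.sub_re, Complex.neg_re, Complex.one_re]
      linarith
    calc ‖s‖ * x ^ (-s - 1).re ≤ 2 * (n : ℝ) ^ (-(3/2) : ℝ) := by
          apply mul_le_mul habs (h1.trans h2) (Real.rpow_nonneg hx0.le _) (by norm_num)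
      _ = C := rfl
  have hmvt := Convex.norm_image_sub_le_of_norm_hasDerivWithin_le key bound
    (convex_Icc _ _) (Set.mem_Icc.mpr ⟨le_refl _, by linarith⟩)
    (Set.mem_Icc.mpr ⟨by linarith, le_refl _⟩)
  have hrw : cterm α n s = ((((n:ℝ) + α : ℝ) : ℂ)) ^ (-s) - ((((n:ℝ) + 1 : ℝ) : ℂ)) ^ (-s) := by
    rw [cterm]
    push_cast
    rw [Complex.cpow_neg, Complex.cpow_neg, one_div, one_div]
  rw [hrw, ← norm_neg]
  have := hmvt
  rw [Real.norm_eq_abs, _root_.abs_of_nonneg (by linarith)] at this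
  calc ‖-((((n:ℝ) + α : ℝ) : ℂ) ^ (-s) - (((n:ℝ) + 1 : ℝ) : ℂ) ^ (-s))‖
      = ‖(((n:ℝ) + 1 : ℝ) : ℂ) ^ (-s) - (((n:ℝ) + α : ℝ) : ℂ) ^ (-s)‖ := by
        rw [neg_sub]
    _ ≤ C * ((n:ℝ) + 1 - ((n:ℝ) + α)) := this
    _ ≤ C * 1 := by
        apply mul_le_mul_of_nonneg_left (by linarith) hC0
    _ = C := mul_one C

lemma norm_cterm_zero_le {α : ℝ} (hα : 0 < α) (hα1 : α ≤ 1) {s : ℂ}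
    (habs : ‖s‖ ≤ 2) : ‖cterm α 0 s‖ ≤ α ^ (-2 : ℝ) + 1 := by
  have hre : s.re ≤ 2 := by
    calc s.re ≤ |s.re| := le_abs_self _
      _ ≤ ‖s‖ := Complex.abs_re_le_norm s
      _ ≤ 2 := habs
  have h1 : cterm α 0 s = 1 / (α : ℂ) ^ s - 1 := by
    simp [cterm]
  rw [h1]
  have h2 : ‖(1 : ℂ) / (α : ℂ) ^ s‖ = α ^ (-s.re) := by
    rw [norm_div, norm_one, Complex.norm_cpow_eq_rpow_re_of_pos hα,
      Real.rpow_neg hα.le, one_div]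
  calc ‖(1:ℂ) / (α : ℂ) ^ s - 1‖ ≤ ‖(1:ℂ) / (α : ℂ) ^ s‖ + ‖(1:ℂ)‖ := norm_sub_le _ _
    _ = α ^ (-s.re) + 1 := by rw [h2, norm_one]
    _ ≤ α ^ (-2 : ℝ) + 1 := by
        have := Real.rpow_le_rpow_of_exponent_ge hα hα1 (by linarith : (-2:ℝ) ≤ -s.re)
        linarith

noncomputable def ubound (α : ℝ) (n : ℕ) : ℝ :=
  if n = 0 then α ^ (-2 : ℝ) + 1 else 2 * (n : ℝ) ^ (-(3/2) : ℝ)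

lemma summable_ubound (α : ℝ) : Summable (ubound α) := by
  have h0 : Summable (fun n : ℕ => 2 * (((n + 1 : ℕ)) : ℝ) ^ (-(3/2) : ℝ)) :=
    ((summable_nat_add_iff 1).mpr (Real.summable_nat_rpow.mpr (by norm_num))).mul_left 2
  refine (summable_nat_add_iff 1).mp (h0.congr fun n => ?_)
  simp [ubound]

lemma norm_cterm_le_ubound {α : ℝ} (hα : 0 < α) (hα1 : α ≤ 1) (n : ℕ) {s : ℂ}
    (hs : s ∈ {z : ℂ | 1/2 < z.re} ∩ Metric.ball 0 2) : ‖cterm α n s‖ ≤ ubound α n := by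
  obtain ⟨hs1, hs2⟩ := hs
  have habs : ‖s‖ ≤ 2 := by
    have := Metric.mem_ball.mp hs2
    rw [dist_zero_right] at this
    linarith
  rcases eq_or_ne n 0 with rfl | hn
  · simpa [ubound] using norm_cterm_zero_le hα hα1 habs
  · simpa [ubound, hn] using norm_cterm_le hα hα1 (le_of_lt hs1) habs hn

lemma continuousOn_Fc {α : ℝ} (hα : 0 < α) (hα1 : α ≤ 1) :
    ContinuousOn (Fc α) ({z : ℂ | 1/2 < z.re} ∩ Metric.ball 0 2) := by
  apply continuousOn_tsum (u := ubound α) ?_ (summable_ubound α)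
    (fun n x hx => norm_cterm_le_ubound hα hα1 n hx)
  intro n
  have hb1 : ((n : ℂ) + (α : ℂ)) ≠ 0 := by
    have h : ((n : ℂ) + α) = (((n : ℝ) + α : ℝ) : ℂ) := by push_cast; ring
    rw [h, Ne, Complex.ofReal_eq_zero]
    positivity
  have hb2 : ((n : ℂ) + 1) ≠ 0 := by
    have h : ((n : ℂ) + 1) = (((n : ℝ) + 1 : ℝ) : ℂ) := by push_cast; ring
    rw [h, Ne, Complex.ofReal_eq_zero]
    positivity
  apply ContinuousOn.sub
  · exact (continuous_const.div (continuous_id.const_cpow (Or.inl hb1))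
      (fun x => by simp [Complex.cpow_eq_zero_iff, hb1])).continuousOn
  · exact (continuous_const.div (continuous_id.const_cpow (Or.inl hb2))
      (fun x => by simp [Complex.cpow_eq_zero_iff, hb2])).continuousOn


lemma Fc_eq_of_one_lt_re {α : ℝ} (hα : 0 < α) (hα1 : α ≤ 1) {s : ℂ} (hs : 1 < s.re) :
    Fc α s = hurwitzZeta (α : UnitAddCircle) s - riemannZeta s := by
  have h1 := hasSum_hurwitzZeta_of_one_lt_re (a := α) ⟨hα.le, hα1⟩ hs
  have h2 := hasSum_hurwitzZeta_of_one_lt_re (a := (1:ℝ)) ⟨zero_le_one, le_refl 1⟩ hs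
  have h3 : ((1:ℝ) : UnitAddCircle) = 0 := AddCircle.coe_period (p := (1:ℝ))
  rw [h3, hurwitzZeta_zero] at h2
  simpa [Fc, cterm] using (h1.sub h2).tsum_eq

lemma Fc_one (α : ℝ) :
    Fc α 1 = ((∑' n : ℕ, (1/((n:ℝ)+α) - 1/((n:ℝ)+1)) : ℝ) : ℂ) := by
  rw [Fc, Complex.ofReal_tsum]
  refine tsum_congr fun n => ?_
  rw [cterm, Complex.cpow_one, Complex.cpow_one]
  push_cast
  ring

lemma tendsto_hurwitz_sub {α : ℝ} (hα : 0 < α) (hα1 : α ≤ 1) :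
    Tendsto (fun s : ℂ => hurwitzZeta (α : UnitAddCircle) s - 1/(s-1)) (𝓝[≠] 1)
      (𝓝 ((-(deriv Real.Gamma α / Real.Gamma α) : ℝ) : ℂ)) := by
  have hD : Differentiable ℂ (fun s => hurwitzZeta (α : UnitAddCircle) s - riemannZeta s) := by
    simpa [hurwitzZeta_zero] using
      differentiable_hurwitzZeta_sub_hurwitzZeta (α : UnitAddCircle) 0
  have hUopen : IsOpen ({z : ℂ | 1/2 < z.re} ∩ Metric.ball 0 2) :=
    (isOpen_lt continuous_const Complex.continuous_re).inter Metric.isOpen_ball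
  have h1U : (1:ℂ) ∈ {z : ℂ | 1/2 < z.re} ∩ Metric.ball 0 2 := by
    constructor
    · simp only [Set.mem_setOf_eq, Complex.one_re]; norm_num
    · simp [Metric.mem_ball]
  have hFc1 : ContinuousAt (Fc α) 1 :=
    (continuousOn_Fc hα hα1).continuousAt (hUopen.mem_nhds h1U)
  have hne : (𝓝[{z : ℂ | 1 < z.re}] (1:ℂ)).NeBot := by
    rw [← mem_closure_iff_nhdsWithin_neBot]
    have h0 : Tendsto (fun n : ℕ => (1:ℝ) + 1/((n:ℝ)+1)) atTop (𝓝 1) := by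
      simpa using tendsto_const_nhds.add (tendsto_one_div_add_atTop_nhds_zero_nat (𝕜 := ℝ))
    have ht : Tendsto (fun n : ℕ => (((1:ℝ) + 1/((n:ℝ)+1) : ℝ) : ℂ)) atTop (𝓝 1) := by
      simpa using h0.ofReal
    refine mem_closure_of_tendsto ht (Eventually.of_forall fun n => ?_)
    simp only [Set.mem_setOf_eq, Complex.ofReal_re]
    have : (0:ℝ) < 1/((n:ℝ)+1) := by positivity
    linarith
  have hDF : (fun s => hurwitzZeta (α : UnitAddCircle) s - riemannZeta s) 1 = Fc α 1 := by
    refine tendsto_nhds_unique (l := 𝓝[{z : ℂ | 1 < z.re}] (1:ℂ))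
      (f := fun s => hurwitzZeta (α : UnitAddCircle) s - riemannZeta s) ?_ ?_
    · exact (hD.continuous.tendsto 1).mono_left nhdsWithin_le_nhds
    · refine ((hFc1.tendsto).mono_left nhdsWithin_le_nhds).congr' ?_
      filter_upwards [self_mem_nhdsWithin] with s hs
      exact Fc_eq_of_one_lt_re hα hα1 hs
  have hsum : Fc α 1
      = ((-(deriv Real.Gamma α / Real.Gamma α) - Real.eulerMascheroniConstant : ℝ) : ℂ) := by
    rw [Fc_one α]
    congr 1
    have h4 : ∑' n : ℕ, (1/((n:ℝ)+α) - 1/((n:ℝ)+1)) = -∑' n : ℕ, dterm α n := by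
      rw [← tsum_neg]
      exact tsum_congr fun n => by rw [dterm]; ring
    have h5 := digamma_eq hα
    rw [h4]
    linarith
  have hmain := ((hD.continuous.tendsto 1).mono_left
    (nhdsWithin_le_nhds (s := {(1:ℂ)}ᶜ))).add tendsto_riemannZeta_sub_one_div
  have heq : ∀ s : ℂ, (hurwitzZeta (α : UnitAddCircle) s - riemannZeta s)
      + (riemannZeta s - 1/(s-1)) = hurwitzZeta (α : UnitAddCircle) s - 1/(s-1) :=
    fun s => by ring
  have hval : (fun s => hurwitzZeta (α : UnitAddCircle) s - riemannZeta s) 1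
      + ((Real.eulerMascheroniConstant : ℝ) : ℂ)
      = ((-(deriv Real.Gamma α / Real.Gamma α) : ℝ) : ℂ) := by
    rw [hDF, hsum]
    push_cast
    ring
  exact hval ▸ hmain.congr heq

end StieltjesAux


theorem hurwitzZeta_sub_pole_value_at_one (α : ℝ) (hα : 0 < α) (hα1 : α ≤ 1) :
    ∃ g : ℂ → ℂ, DifferentiableAt ℂ g 1 ∧
      (∀ s : ℂ, s ≠ 1 → g s = hurwitzZeta (α : UnitAddCircle) s - 1 / (s - 1)) ∧
      g 1 = -(deriv Real.Gamma α / Real.Gamma α : ℝ) ∧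
      stieltjesGammaGen 0 α = -(deriv Real.Gamma α / Real.Gamma α) := by
  have hlim := StieltjesAux.tendsto_hurwitz_sub hα hα1
  set f : ℂ → ℂ := fun s : ℂ => hurwitzZeta (α : UnitAddCircle) s - 1 / (s - 1) with hf
  set L : ℂ := ((-(deriv Real.Gamma α / Real.Gamma α) : ℝ) : ℂ) with hL
  have hg : hurwitzZetaSubPole α = Function.update f 1 (limUnder (𝓝[≠] (1:ℂ)) f) := rfl
  have hlu : limUnder (𝓝[≠] (1:ℂ)) f = L := hlim.limUnder_eq
  have hval : hurwitzZetaSubPole α 1 = L := by rw [hg, Function.update_self, hlu]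
  have hdiff : DifferentiableAt ℂ (hurwitzZetaSubPole α) 1 := by
    have hd : DifferentiableOn ℂ f (Set.univ \ {1}) := by
      intro s hs
      have hs1 : s ≠ 1 := hs.2
      refine DifferentiableAt.differentiableWithinAt ?_
      exact (differentiableAt_hurwitzZeta _ hs1).sub
        ((differentiableAt_const (1:ℂ)).div (differentiableAt_id.sub_const 1)
          (sub_ne_zero.mpr hs1))
    have hb : Filter.IsBoundedUnder (· ≤ ·) (𝓝[≠] (1:ℂ)) (norm ∘ fun z => f z - f 1) :=
      ((hlim.sub_const (f 1)).norm).isBoundedUnder_le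
    have hupd := Complex.differentiableOn_update_limUnder_of_isLittleO (c := (1:ℂ))
      (s := Set.univ) Filter.univ_mem hd hb.isLittleO_sub_self_inv
    rw [hg]
    exact hupd.differentiableAt Filter.univ_mem
  refine ⟨hurwitzZetaSubPole α, hdiff, ?_, ?_, ?_⟩
  · intro s hs
    rw [hg]
    exact Function.update_of_ne hs _ _
  · rw [hval, hL]
    push_cast
    ring
  · rw [stieltjesGammaGen, iteratedDeriv_zero, hval, hL]
    simp
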